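/- Let u, v ∈ ℝ³ and let x ∈ ℝ with x ≥ 0 satisfy 2·cosh(x) = tr( exp(u·σ) · exp(v·σ) ). Then x² ≤ 2(‖u‖² + ‖v‖²); equivalently, −x²/2 + ‖u‖² + ‖v‖² ≥ 0. -/

import Mathlib

open Matrix
open scoped Nat
set_option maxHeartbeats 1000000

/-- For `v ∈ ℝ³`, the matrix `v·σ = v₁σ₁ + v₂σ₂ + v₃σ₃` built from the Pauli matrices. -/
noncomputable def pauliDot (v : EuclideanSpace ℝ (Fin 3)) : Matrix (Fin 2) (Fin 2) ℂ :=
  (v 0 : ℂ) • !![0, 1; 1, 0] +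
  (v 1 : ℂ) • !![0, -Complex.I; Complex.I, 0] +
  (v 2 : ℂ) • !![1, 0; 0, -1]


lemma pauliDot_eq (u : EuclideanSpace ℝ (Fin 3)) :
    pauliDot u = !![(u 2 : ℂ), (u 0 : ℂ) - (u 1 : ℂ) * Complex.I;
                    (u 0 : ℂ) + (u 1 : ℂ) * Complex.I, -(u 2 : ℂ)] := by
  ext i j
  fin_cases i <;> fin_cases j <;> simp [pauliDot] <;> ring

lemma norm_sq_eq (u : EuclideanSpace ℝ (Fin 3)) :
    ((‖u‖ : ℂ))^2 = (u 0 : ℂ)^2 + (u 1 : ℂ)^2 + (u 2 : ℂ)^2 := by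
  have hn : (‖u‖:ℝ)^2 = u 0 ^ 2 + u 1 ^ 2 + u 2 ^ 2 := by
    rw [EuclideanSpace.norm_eq, Real.sq_sqrt (by positivity)]
    simp [Fin.sum_univ_three, sq_abs]
  exact_mod_cast congrArg (Complex.ofReal) hn

lemma pauliDot_sq (u : EuclideanSpace ℝ (Fin 3)) :
    pauliDot u * pauliDot u = ((‖u‖ : ℂ)^2) • 1 := by
  rw [pauliDot_eq, norm_sq_eq]
  ext i j
  fin_cases i <;> fin_cases j <;>
    · simp [Matrix.mul_apply, Fin.sum_univ_two, Matrix.one_apply]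
      ring_nf
      try (simp only [Complex.I_sq]; ring)

lemma pauliDot_trace (u : EuclideanSpace ℝ (Fin 3)) : (pauliDot u).trace = 0 := by
  rw [pauliDot_eq]; simp [Matrix.trace, Fin.sum_univ_two, Matrix.diag]

lemma pauliDot_mul_trace (u v : EuclideanSpace ℝ (Fin 3)) :
    (pauliDot u * pauliDot v).trace =
      2 * ((u 0 * v 0 + u 1 * v 1 + u 2 * v 2 : ℝ) : ℂ) := by
  rw [pauliDot_eq, pauliDot_eq]
  simp [Matrix.trace, Matrix.mul_apply, Fin.sum_univ_two, Matrix.diag]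
  ring_nf
  simp only [Complex.I_sq]
  ring

open NormedSpace in
lemma exp_of_sq (A : Matrix (Fin 2) (Fin 2) ℂ) (t : ℝ) (ht : t ≠ 0)
    (hA : A * A = ((t : ℂ)^2) • 1) :
    exp A = (Complex.cosh t) • (1 : Matrix (Fin 2) (Fin 2) ℂ)
      + (Complex.sinh t / t) • A := by
  have htc : (t : ℂ) ≠ 0 := Complex.ofReal_ne_zero.mpr ht
  have hpe : ∀ k : ℕ, A ^ (2 * k) = ((t:ℂ) ^ (2 * k)) • (1 : Matrix (Fin 2) (Fin 2) ℂ) := by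
    intro k
    induction k with
    | zero => simp
    | succ n ih =>
      have h2 : 2 * (n + 1) = 2 * n + 2 := by ring
      rw [h2, pow_add, ih, pow_two, hA, smul_mul_assoc, one_mul, smul_smul, ← pow_add]
  have hpo : ∀ k : ℕ, A ^ (2 * k + 1) = ((t:ℂ) ^ (2 * k)) • A := by
    intro k
    rw [pow_succ, hpe, smul_mul_assoc, one_mul]
  have hc : HasSum (fun k : ℕ => ((((2*k)! : ℕ) : ℂ))⁻¹ • A ^ (2*k))
      ((Complex.cosh t) • (1 : Matrix (Fin 2) (Fin 2) ℂ)) := by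
    have h1 := (Complex.hasSum_cosh (t:ℂ)).smul_const (1 : Matrix (Fin 2) (Fin 2) ℂ)
    convert h1 using 2 with k
    rw [hpe, smul_smul, div_eq_inv_mul]
  have hs : HasSum (fun k : ℕ => ((((2*k+1)! : ℕ) : ℂ))⁻¹ • A ^ (2*k+1))
      ((Complex.sinh t / t) • A) := by
    have h1 := ((Complex.hasSum_sinh (t:ℂ)).div_const (t:ℂ)).smul_const A
    convert h1 using 2 with k
    rw [hpo, smul_smul]
    congr 1
    rw [pow_succ]
    field_simp
  rw [exp_eq_tsum ℂ]
  exact (hc.even_add_odd hs).tsum_eq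

open NormedSpace in
lemma exp_pauli (u : EuclideanSpace ℝ (Fin 3)) :
    ∃ s : ℝ, 0 ≤ s ∧ s * ‖u‖ = Real.sinh ‖u‖ ∧
      exp (pauliDot u) =
        ((Real.cosh ‖u‖ : ℝ) : ℂ) • (1 : Matrix (Fin 2) (Fin 2) ℂ)
          + ((s : ℝ) : ℂ) • pauliDot u := by
  by_cases hu : u = 0
  · refine ⟨1, zero_le_one, by simp [hu], ?_⟩
    have h0 : pauliDot u = 0 := by
      subst hu
      ext i j
      fin_cases i <;> fin_cases j <;> simp [pauliDot]
    rw [h0, exp_zero]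
    simp [hu]
  · have hn : ‖u‖ ≠ 0 := norm_ne_zero_iff.mpr hu
    have hnpos : 0 < ‖u‖ := norm_pos_iff.mpr hu
    refine ⟨Real.sinh ‖u‖ / ‖u‖, by positivity, by field_simp, ?_⟩
    rw [exp_of_sq (pauliDot u) ‖u‖ hn (pauliDot_sq u)]
    congr 1
    · rw [Complex.ofReal_cosh]
    · congr 1
      rw [← Complex.ofReal_sinh]
      push_cast
      ring
/-- If `u, v ∈ ℝ³` and `x ≥ 0` satisfies
`2 cosh x = tr(exp(u·σ) exp(v·σ))`, then `x² ≤ 2(‖u‖² + ‖v‖²)`. -/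
theorem statement7 (u v : EuclideanSpace ℝ (Fin 3)) (x : ℝ) (hx : 0 ≤ x)
    (h : ((2 * Real.cosh x : ℝ) : ℂ) =
      (NormedSpace.exp (pauliDot u) * NormedSpace.exp (pauliDot v)).trace) :
    x^2 ≤ 2 * (‖u‖^2 + ‖v‖^2) := by
  obtain ⟨s, hs0, hsa, hEu⟩ := exp_pauli u
  obtain ⟨r, hr0, hrb, hEv⟩ := exp_pauli v
  set a := ‖u‖ with ha'
  set b := ‖v‖ with hb'
  have ha : 0 ≤ a := norm_nonneg u
  have hb : 0 ≤ b := norm_nonneg v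
  have hw : True := trivial
  have hcomp : (NormedSpace.exp (pauliDot u) * NormedSpace.exp (pauliDot v)).trace
      = ((2 * (Real.cosh a * Real.cosh b) + 2 * (s * r * (u 0 * v 0 + u 1 * v 1 + u 2 * v 2)) : ℝ) : ℂ) := by
    rw [hEu, hEv]
    simp only [add_mul, mul_add, smul_mul_assoc, mul_smul_comm, smul_smul, one_mul,
      mul_one, Matrix.trace_add, Matrix.trace_smul, Matrix.trace_one, pauliDot_trace,
      pauliDot_mul_trace, smul_zero, smul_eq_mul, Fintype.card_fin]
    push_cast
    ring
  have key : 2 * Real.cosh x = 2 * (Real.cosh a * Real.cosh b) + 2 * (s * r * (u 0 * v 0 + u 1 * v 1 + u 2 * v 2)) := by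
    exact_mod_cast h.trans hcomp
  have hCS : u 0 * v 0 + u 1 * v 1 + u 2 * v 2 ≤ a * b := by
    have h1 : (inner ℝ u v : ℝ) ≤ ‖u‖ * ‖v‖ := real_inner_le_norm u v
    have h2 : (inner ℝ u v : ℝ) = u 0 * v 0 + u 1 * v 1 + u 2 * v 2 := by
      simp [PiLp.inner_apply, RCLike.inner_apply, Fin.sum_univ_three]
      ring
    linarith
  have hle : Real.cosh x ≤ Real.cosh (a + b) := by
    rw [Real.cosh_add]
    have hsr : 0 ≤ s * r := mul_nonneg hs0 hr0
    have h3 : s * r * (u 0 * v 0 + u 1 * v 1 + u 2 * v 2) ≤ Real.sinh a * Real.sinh b := by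
      calc s * r * (u 0 * v 0 + u 1 * v 1 + u 2 * v 2) ≤ s * r * (a * b) := by nlinarith
        _ = (s * a) * (r * b) := by ring
        _ = Real.sinh a * Real.sinh b := by rw [hsa, hrb]
    linarith
  have hxab : x ≤ a + b := by
    have h4 := Real.cosh_le_cosh.mp hle
    rwa [abs_of_nonneg hx, abs_of_nonneg (by positivity)] at h4
  nlinarith [sq_nonneg (a - b)]
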